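/- Fix m and k with 2k ≤ m. Let f : [m]_k → ℕ be a committee scoring function satisfying the fixed-majority criterion. Then for every t ∈ {0,…,k}, f(I_t) = f(J_t), where I_t = (1,…,t, k+1,…,k+(k−t)) and J_t = (k−t+1,…,k, m−(k−t)+1,…,m). -/

import Mathlib

private lemma sortOfFn {k : ℕ} (g : Fin k → ℕ) (hg : StrictMono g) :
    (List.ofFn g).toFinset.sort (· ≤ ·) = List.ofFn g := by
  have hnd : (List.ofFn g).Nodup := List.nodup_ofFn.mpr hg.injective
  exact List.Perm.eq_of_pairwise'
    (Finset.pairwise_sort _ _)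
    (List.pairwise_ofFn.mpr fun i j h => le_of_lt (hg h))
    ((Finset.sort_perm_toList _ _).trans
      (List.perm_of_nodup_nodup_toFinset_eq (Finset.nodup_toList _) hnd
        (by rw [Finset.toList_toFinset])))

private lemma getD_sortOfFn {k : ℕ} (g : Fin k → ℕ) (hg : StrictMono g) (A : Finset ℕ)
    (hA : A = (List.ofFn g).toFinset) (s : Fin k) :
    (A.sort (· ≤ ·)).getD (s : ℕ) 0 = g s := by
  subst hA
  rw [sortOfFn g hg, List.getD_eq_getElem _ _ (by simp [s.isLt]), List.getElem_ofFn]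

private def vtwo (m k t : ℕ) (hm : 2 * k ≤ m) (ht : t ≤ k) : Fin m ≃ Fin m where
  toFun c := ⟨if (c : ℕ) < t then c + (k - t)
    else if (c : ℕ) < k then c + (m - k)
    else if (c : ℕ) < 2 * k - t then c - k
    else c - (k - t), by have := c.isLt; split_ifs <;> omega⟩
  invFun p := ⟨if (p : ℕ) < k - t then p + k
    else if (p : ℕ) < k then p - (k - t)
    else if (p : ℕ) < m - (k - t) then p + (k - t)
    else p - (m - k), by have := p.isLt; split_ifs <;> omega⟩
  left_inv c := by
    have := c.isLt
    apply Fin.ext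
    simp only [Fin.val_mk]
    split_ifs <;> omega
  right_inv p := by
    have := p.isLt
    apply Fin.ext
    simp only [Fin.val_mk]
    split_ifs <;> omega

private lemma vtwo_val (m k t : ℕ) (hm : 2 * k ≤ m) (ht : t ≤ k) (c : Fin m) :
    ((vtwo m k t hm ht) c : ℕ) = if (c : ℕ) < t then c + (k - t)
      else if (c : ℕ) < k then c + (m - k)
      else if (c : ℕ) < 2 * k - t then c - k
      else c - (k - t) := rfl

/-- under the fixed-majority criterion, `f(I_t) = f(J_t)` for all
`t ∈ {0,…,k}`, where (1-indexed) `I_t = (1,…,t,k+1,…,k+(k−t))` and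
`J_t = (k−t+1,…,k, m−(k−t)+1,…,m)`. -/
theorem fixed_majority_f_It_eq_f_Jt (m k : ℕ) (hmk : 2 * k ≤ m)
    (f : (Fin k → ℕ) → ℕ)
    (hdom : ∀ I J : Fin k → ℕ, StrictMono I → StrictMono J →
      (∀ t, 1 ≤ I t ∧ I t ≤ m) → (∀ t, 1 ≤ J t ∧ J t ≤ m) →
      (∀ t, I t ≤ J t) → f J ≤ f I)
    (score : List (Fin m ≃ Fin m) → Finset (Fin m) → ℕ)
    (hscore : ∀ V S, score V S =
      (V.map (fun v => f (fun t =>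
        ((S.image (fun c => (v c : ℕ) + 1)).sort (· ≤ ·)).getD t 0))).sum)
    (hfm : ∀ (V : List (Fin m ≃ Fin m)) (W : Finset (Fin m)), W.card = k →
      V.length < 2 * V.countP (fun v => decide (∀ c ∈ W, (v c : ℕ) < k)) →
      ∀ S : Finset (Fin m), S.card = k → S ≠ W → score V S < score V W) :
    ∀ t ≤ k,
      f (fun s => if (s : ℕ) < t then (s : ℕ) + 1 else k + ((s : ℕ) - t) + 1) =
      f (fun s => if (s : ℕ) < t then k - t + (s : ℕ) + 1
                  else m - (k - t) + ((s : ℕ) - t) + 1) := by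
  intro t ht
  by_cases htk : t = k
  · subst htk
    congr 1
    funext s
    have := s.isLt
    split_ifs <;> omega
  have htk' : t < k := lt_of_le_of_ne ht htk
  have hkm : k < m := by omega
  set It : Fin k → ℕ := fun s => if (s : ℕ) < t then (s : ℕ) + 1 else k + ((s : ℕ) - t) + 1
    with hIt
  set Jt : Fin k → ℕ := fun s => if (s : ℕ) < t then k - t + (s : ℕ) + 1
      else m - (k - t) + ((s : ℕ) - t) + 1 with hJt
  set K : Fin k → ℕ := fun s => (s : ℕ) + 1 with hK
  -- monotonicity and bounds
  have hItmono : StrictMono It := by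
    intro a b hab
    have := a.isLt; have := b.isLt
    rw [Fin.lt_def] at hab
    simp only [hIt]; split_ifs <;> omega
  have hJtmono : StrictMono Jt := by
    intro a b hab
    have := a.isLt; have := b.isLt
    rw [Fin.lt_def] at hab
    simp only [hJt]; split_ifs <;> omega
  have hKmono : StrictMono K := by
    intro a b hab
    rw [Fin.lt_def] at hab
    simp only [hK]; omega
  have hItb : ∀ s, 1 ≤ It s ∧ It s ≤ m := by
    intro s; have := s.isLt; simp only [hIt]; split_ifs <;> omega
  have hJtb : ∀ s, 1 ≤ Jt s ∧ Jt s ≤ m := by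
    intro s; have := s.isLt; simp only [hJt]; split_ifs <;> omega
  have hKb : ∀ s, 1 ≤ K s ∧ K s ≤ m := by
    intro s; have := s.isLt; simp only [hK]; omega
  have hJI : f Jt ≤ f It := by
    apply hdom It Jt hItmono hJtmono hItb hJtb
    intro s; have := s.isLt; simp only [hIt, hJt]; split_ifs <;> omega
  have hIK : f It ≤ f K := by
    apply hdom K It hKmono hItmono hKb hItb
    intro s; have := s.isLt; simp only [hIt, hK]; split_ifs <;> omega
  by_contra hne
  have hlt : f Jt < f It := lt_of_le_of_ne hJI fun h => hne h.symm
  -- committees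
  have hWmem : ∀ n ∈ Finset.range k, n < m := by
    intro n hn; rw [Finset.mem_range] at hn; omega
  have hSmem : ∀ n ∈ Finset.range t ∪ Finset.Ico k (2 * k - t), n < m := by
    intro n hn
    rcases Finset.mem_union.mp hn with h | h
    · rw [Finset.mem_range] at h; omega
    · rw [Finset.mem_Ico] at h; omega
  set W : Finset (Fin m) := (Finset.range k).attachFin hWmem with hW
  set S : Finset (Fin m) := (Finset.range t ∪ Finset.Ico k (2 * k - t)).attachFin hSmem with hS
  have hWcard : W.card = k := by rw [hW, Finset.card_attachFin, Finset.card_range]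
  have hScard : S.card = k := by
    rw [hS, Finset.card_attachFin, Finset.card_union_of_disjoint, Finset.card_range,
      Nat.card_Ico]
    · omega
    · rw [Finset.disjoint_left]
      intro a ha hb
      rw [Finset.mem_range] at ha; rw [Finset.mem_Ico] at hb; omega
  have hSW : S ≠ W := by
    intro h
    have h1 : (⟨k, hkm⟩ : Fin m) ∈ S := by
      rw [hS, Finset.mem_attachFin, Finset.mem_union, Finset.mem_Ico]
      right; constructor <;> simp <;> omega
    rw [h, hW, Finset.mem_attachFin, Finset.mem_range] at h1
    simp at h1
  -- voters
  set v1 : Fin m ≃ Fin m := Equiv.refl (Fin m) with hv1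
  set v2 : Fin m ≃ Fin m := vtwo m k t hmk ht with hv2
  -- image computations
  have img1W : W.image (fun c => (v1 c : ℕ) + 1) = (List.ofFn K).toFinset := by
    ext x
    simp only [Finset.mem_image, hW, Finset.mem_attachFin, Finset.mem_range, hv1,
      Equiv.refl_apply, List.mem_toFinset, List.mem_ofFn, Set.mem_range, hK]
    constructor
    · rintro ⟨c, hc, rfl⟩
      exact ⟨⟨(c : ℕ), hc⟩, rfl⟩
    · rintro ⟨i, rfl⟩
      exact ⟨⟨(i : ℕ), lt_trans i.isLt hkm⟩, i.isLt, rfl⟩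
  have img1S : S.image (fun c => (v1 c : ℕ) + 1) = (List.ofFn It).toFinset := by
    ext x
    simp only [Finset.mem_image, hS, Finset.mem_attachFin, Finset.mem_union, Finset.mem_range,
      Finset.mem_Ico, hv1, Equiv.refl_apply, List.mem_toFinset, List.mem_ofFn, Set.mem_range, hIt]
    constructor
    · rintro ⟨c, hc, rfl⟩
      rcases hc with hc | hc
      · exact ⟨⟨(c : ℕ), by omega⟩, by simp only [Fin.val_mk]; split_ifs <;> omega⟩
      · exact ⟨⟨(c : ℕ) - k + t, by omega⟩, by simp only [Fin.val_mk]; split_ifs <;> omega⟩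
    · rintro ⟨i, rfl⟩
      have hi := i.isLt
      by_cases hit : (i : ℕ) < t
      · exact ⟨⟨(i : ℕ), by omega⟩, Or.inl hit, by simp only [Fin.val_mk]; split_ifs <;> omega⟩
      · refine ⟨⟨k + ((i : ℕ) - t), by omega⟩, Or.inr (by simp only [Fin.val_mk]; omega), ?_⟩
        simp only [Fin.val_mk]; split_ifs <;> omega
  have img2W : W.image (fun c => (v2 c : ℕ) + 1) = (List.ofFn Jt).toFinset := by
    ext x
    simp only [Finset.mem_image, hW, Finset.mem_attachFin, Finset.mem_range, hv2,
      vtwo_val, List.mem_toFinset, List.mem_ofFn, Set.mem_range, hJt]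
    constructor
    · rintro ⟨c, hc, rfl⟩
      exact ⟨⟨(c : ℕ), hc⟩, by simp only [Fin.val_mk]; split_ifs <;> omega⟩
    · rintro ⟨i, rfl⟩
      have hi := i.isLt
      exact ⟨⟨(i : ℕ), lt_trans hi hkm⟩, hi, by simp only [Fin.val_mk]; split_ifs <;> omega⟩
  have img2S : S.image (fun c => (v2 c : ℕ) + 1) = (List.ofFn K).toFinset := by
    ext x
    simp only [Finset.mem_image, hS, Finset.mem_attachFin, Finset.mem_union, Finset.mem_range,
      Finset.mem_Ico, hv2, vtwo_val, List.mem_toFinset, List.mem_ofFn, Set.mem_range, hK]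
    constructor
    · rintro ⟨c, hc, rfl⟩
      rcases hc with hc | hc
      · exact ⟨⟨(c : ℕ) + (k - t), by omega⟩, by simp only [Fin.val_mk]; split_ifs <;> omega⟩
      · exact ⟨⟨(c : ℕ) - k, by omega⟩, by simp only [Fin.val_mk]; split_ifs <;> omega⟩
    · rintro ⟨i, rfl⟩
      have hi := i.isLt
      by_cases hikt : (i : ℕ) < k - t
      · refine ⟨⟨(i : ℕ) + k, by omega⟩, Or.inr (by simp only [Fin.val_mk]; omega), ?_⟩
        simp only [Fin.val_mk]; split_ifs <;> omega
      · refine ⟨⟨(i : ℕ) - (k - t), by omega⟩, Or.inl (by simp only [Fin.val_mk]; omega), ?_⟩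
        simp only [Fin.val_mk]; split_ifs <;> omega
  -- the election
  set A : ℕ := f K - f It with hA
  set V : List (Fin m ≃ Fin m) := List.replicate (A + 1) v1 ++ List.replicate A v2 with hV
  have hmaj : V.length < 2 * V.countP (fun v => decide (∀ c ∈ W, (v c : ℕ) < k)) := by
    have hcond : ∀ c ∈ W, (v1 c : ℕ) < k := by
      intro c hc
      rw [hW, Finset.mem_attachFin, Finset.mem_range] at hc
      simpa [hv1] using hc
    rw [hV, List.countP_append, List.countP_replicate, List.countP_replicate,
      List.length_append, List.length_replicate, List.length_replicate]
    split_ifs with h1 h2 <;> try omega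
    all_goals exact absurd hcond (by simpa using h1)
  have hposW1 : (fun s : Fin k =>
      ((W.image (fun c => (v1 c : ℕ) + 1)).sort (· ≤ ·)).getD (s : ℕ) 0) = K :=
    funext fun s => getD_sortOfFn K hKmono _ img1W s
  have hposS1 : (fun s : Fin k =>
      ((S.image (fun c => (v1 c : ℕ) + 1)).sort (· ≤ ·)).getD (s : ℕ) 0) = It :=
    funext fun s => getD_sortOfFn It hItmono _ img1S s
  have hposW2 : (fun s : Fin k =>
      ((W.image (fun c => (v2 c : ℕ) + 1)).sort (· ≤ ·)).getD (s : ℕ) 0) = Jt :=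
    funext fun s => getD_sortOfFn Jt hJtmono _ img2W s
  have hposS2 : (fun s : Fin k =>
      ((S.image (fun c => (v2 c : ℕ) + 1)).sort (· ≤ ·)).getD (s : ℕ) 0) = K :=
    funext fun s => getD_sortOfFn K hKmono _ img2S s
  have hscW : score V W = (A + 1) * f K + A * f Jt := by
    rw [hscore, hV]
    simp only [List.map_append, List.map_replicate, List.sum_append, List.sum_replicate,
      smul_eq_mul]
    rw [hposW1, hposW2]
  have hscS : score V S = (A + 1) * f It + A * f K := by
    rw [hscore, hV]
    simp only [List.map_append, List.map_replicate, List.sum_append, List.sum_replicate,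
      smul_eq_mul]
    rw [hposS1, hposS2]
  have hineq := hfm V W hWcard hmaj S hScard hSW
  rw [hscW, hscS] at hineq
  -- final arithmetic contradiction
  have hKA : f K = f It + A := by omega
  rw [hKA] at hineq
  have h4 : A * f It < A * (f Jt + 1) := by nlinarith [hineq]
  have h3 : A * (f Jt + 1) ≤ A * f It := Nat.mul_le_mul_left A hlt
  exact lt_irrefl _ (h4.trans_le h3)
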